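/- Let p ∈ C[0,∞) ∩ C¹(0,∞) with p(0)=0, p'(ρ)>0 for ρ>0, and lim_{ρ→∞} p'(ρ)/ρ^{γ−1} = p_∞ > 0 for some γ > 3/2. Then for each r > 0 there exists c(r) > 0 such that H(ρ) − H'(r)(ρ−r) − H(r) ≥ c(r)(1 + ρ^γ) for all ρ outside the interval (r/2, 2r) (i.e. for 0 ≤ ρ ≤ r/2 and ρ ≥ 2r). -/

import Mathlib

open Set Filter intervalIntegral

/-- Growth lower bound for the relative energy integrand far from `r`:
under the isentropic growth assumption `p'(ρ)/ρ^{γ−1} → p_∞ > 0` with `γ > 3/2`,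
for each `r > 0` there is `c(r) > 0` with
`H(ρ) − H'(r)(ρ−r) − H(r) ≥ c(r)(1 + ρ^γ)` for `ρ ≤ r/2` or `ρ ≥ 2r`. -/
theorem stmt4 (p H : ℝ → ℝ) (γ pinf : ℝ)
    (hpc : ContinuousOn p (Set.Ici (0:ℝ)))
    (hp1 : ContDiffOn ℝ 1 p (Set.Ioi (0:ℝ)))
    (hp0 : p 0 = 0)
    (hp' : ∀ ρ : ℝ, 0 < ρ → 0 < deriv p ρ)
    (hγ : 3 / 2 < γ) (hpinf : 0 < pinf)
    (hlim : Filter.Tendsto (fun ρ : ℝ => deriv p ρ / ρ ^ (γ - 1)) Filter.atTop (nhds pinf))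
    (hH : ∀ ρ : ℝ, 0 < ρ → H ρ = ρ * ∫ z in (1:ℝ)..ρ, p z / z ^ 2)
    (hH0 : H 0 = 0) :
    ∀ r : ℝ, 0 < r → ∃ c : ℝ, 0 < c ∧ ∀ ρ : ℝ, 0 ≤ ρ → (ρ ≤ r / 2 ∨ 2 * r ≤ ρ) →
      c * (1 + ρ ^ γ) ≤ H ρ - deriv H r * (ρ - r) - H r := by
  intro r hr
  have hγ0 : (0:ℝ) < γ := by linarith
  have hγ1 : (0:ℝ) < γ - 1 := by linarith
  -- continuity of p at positive points
  have hpca : ∀ x : ℝ, 0 < x → ContinuousAt p x := fun x hx =>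
    hpc.continuousAt (Filter.mem_of_superset (Ioi_mem_nhds hx) Set.Ioi_subset_Ici_self)
  have hpd : ∀ x : ℝ, 0 < x → HasDerivAt p (deriv p x) x := fun x hx =>
    ((hp1.differentiableOn one_ne_zero).differentiableAt (Ioi_mem_nhds hx)).hasDerivAt
  have hppos : ∀ x : ℝ, 0 < x → 0 < p x := by
    intro x hx
    have hm : StrictMonoOn p (Set.Ici 0) := by
      apply strictMonoOn_of_deriv_pos (convex_Ici 0) hpc
      intro y hy; rw [interior_Ici] at hy; exact hp' y hy
    have := hm Set.self_mem_Ici (Set.mem_Ici.2 hx.le) hx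
    rwa [hp0] at this
  set f : ℝ → ℝ := fun z => p z / z ^ 2 with hf
  set F : ℝ → ℝ := fun ρ => ∫ z in (1:ℝ)..ρ, f z with hFdef
  set G : ℝ → ℝ := fun ρ => F ρ + p ρ / ρ with hGdef
  have hfc : ContinuousOn f (Set.Ioi 0) := by
    intro z hz
    exact ((hpca z hz).continuousWithinAt).div
      ((continuous_pow 2).continuousWithinAt) (pow_ne_zero 2 (ne_of_gt hz))
  have hFd : ∀ x : ℝ, 0 < x → HasDerivAt F (f x) x := by
    intro x hx
    apply intervalIntegral.integral_hasDerivAt_right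
    · apply ContinuousOn.intervalIntegrable
      apply hfc.mono
      intro z hz
      rcases Set.mem_uIcc.1 hz with ⟨h1, _⟩ | ⟨h1, _⟩
      · exact lt_of_lt_of_le one_pos h1
      · exact lt_of_lt_of_le hx h1
    · exact (hfc.stronglyMeasurableAtFilter isOpen_Ioi) x hx
    · exact hfc.continuousAt (Ioi_mem_nhds hx)
  have hHd : ∀ x : ℝ, 0 < x → HasDerivAt H (G x) x := by
    intro x hx
    have h1 : HasDerivAt (fun y => y * F y) (1 * F x + x * f x) x :=
      (hasDerivAt_id x).mul (hFd x hx)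
    have h2 : HasDerivAt H (1 * F x + x * f x) x := by
      apply h1.congr_of_eventuallyEq
      filter_upwards [Ioi_mem_nhds hx] with y hy
      exact hH y hy
    convert h2 using 1
    show F x + p x / x = 1 * F x + x * (p x / x ^ 2)
    field_simp
  have hGd : ∀ x : ℝ, 0 < x → HasDerivAt G (deriv p x / x) x := by
    intro x hx
    have h2 : HasDerivAt (fun y => p y / y) ((deriv p x * x - p x * 1) / x ^ 2) x :=
      (hpd x hx).div (hasDerivAt_id x) (ne_of_gt hx)
    have h3 : HasDerivAt G _ x := (hFd x hx).add h2
    convert h3 using 1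
    show deriv p x / x = p x / x ^ 2 + (deriv p x * x - p x * 1) / x ^ 2
    field_simp
    ring
  have hGmono : StrictMonoOn G (Set.Ioi 0) := by
    apply strictMonoOn_of_deriv_pos (convex_Ioi 0)
    · exact fun x hx => (hGd x hx).continuousAt.continuousWithinAt
    · intro x hx
      rw [interior_Ioi] at hx
      rw [(hGd x hx).deriv]
      exact div_pos (hp' x hx) hx
  set E : ℝ → ℝ := fun ρ => H ρ - G r * (ρ - r) - H r with hEdef
  have hderivH : deriv H r = G r := (hHd r hr).deriv
  have hEd : ∀ x : ℝ, 0 < x → HasDerivAt E (G x - G r) x := by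
    intro x hx
    have h1 : HasDerivAt E _ x := ((hHd x hx).sub (((hasDerivAt_id x).sub_const r).const_mul (G r))).sub_const (H r)
    convert h1 using 1
    ring
  have hEr : E r = 0 := by simp [hEdef]
  have hE0 : E 0 = p r := by
    have hHr : H r = r * F r := hH r hr
    simp only [hEdef, hH0, hHr, hGdef]
    field_simp
    ring
  -- E (r/2) > 0
  have he1 : 0 < E (r/2) := by
    have hanti : StrictAntiOn E (Set.Icc (r/2) r) := by
      apply strictAntiOn_of_deriv_neg (convex_Icc _ _)
      · intro x hx
        have hx0 : 0 < x := lt_of_lt_of_le (by linarith) hx.1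
        exact (hEd x hx0).continuousAt.continuousWithinAt
      · intro x hx
        rw [interior_Icc] at hx
        have hx0 : 0 < x := by linarith [hx.1]
        rw [(hEd x hx0).deriv]
        have := hGmono (Set.mem_Ioi.2 hx0) (Set.mem_Ioi.2 hr) hx.2
        linarith
    have := hanti (Set.left_mem_Icc.2 (by linarith)) (Set.right_mem_Icc.2 (by linarith))
      (by linarith)
    rwa [hEr] at this
  -- E (2r) > 0
  have he2 : 0 < E (2*r) := by
    have hmon : StrictMonoOn E (Set.Icc r (2*r)) := by
      apply strictMonoOn_of_deriv_pos (convex_Icc _ _)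
      · intro x hx
        have hx0 : 0 < x := lt_of_lt_of_le hr hx.1
        exact (hEd x hx0).continuousAt.continuousWithinAt
      · intro x hx
        rw [interior_Icc] at hx
        have hx0 : 0 < x := by linarith [hx.1]
        rw [(hEd x hx0).deriv]
        have := hGmono (Set.mem_Ioi.2 hr) (Set.mem_Ioi.2 hx0) hx.1
        linarith
    have := hmon (Set.left_mem_Icc.2 (by linarith)) (Set.right_mem_Icc.2 (by linarith))
      (by linarith)
    rwa [hEr] at this
  -- E antitone on (0, r/2]
  have hle1 : ∀ ρ : ℝ, 0 < ρ → ρ ≤ r/2 → E (r/2) ≤ E ρ := by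
    intro ρ hρ hρr
    have hanti : AntitoneOn E (Set.Ioc 0 (r/2)) := by
      apply antitoneOn_of_deriv_nonpos (convex_Ioc _ _)
      · intro x hx
        exact (hEd x hx.1).continuousAt.continuousWithinAt
      · intro x hx
        rw [interior_Ioc] at hx
        exact (hEd x hx.1).differentiableAt.differentiableWithinAt
      · intro x hx
        rw [interior_Ioc] at hx
        rw [(hEd x hx.1).deriv]
        have := hGmono (Set.mem_Ioi.2 hx.1) (Set.mem_Ioi.2 hr) (by linarith [hx.2])
        linarith
    exact hanti ⟨hρ, hρr⟩ ⟨by linarith, le_rfl⟩ hρr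
  -- E monotone on [2r, ∞)
  have hmono2 : MonotoneOn E (Set.Ici (2*r)) := by
    apply monotoneOn_of_deriv_nonneg (convex_Ici _)
    · intro x hx
      have hx0 : 0 < x := lt_of_lt_of_le (by linarith) hx
      exact (hEd x hx0).continuousAt.continuousWithinAt
    · intro x hx
      rw [interior_Ici] at hx
      have hx0 : 0 < x := lt_trans (by linarith) hx
      exact (hEd x hx0).differentiableAt.differentiableWithinAt
    · intro x hx
      rw [interior_Ici] at hx
      have hx0 : 0 < x := lt_trans (by linarith) hx
      rw [(hEd x hx0).deriv]
      have hx' : 2*r < x := hx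
      have := hGmono (Set.mem_Ioi.2 hr) (Set.mem_Ioi.2 hx0) (by linarith)
      linarith
  -- pick M₀
  have hev : ∀ᶠ x in Filter.atTop, pinf/2 < deriv p x / x ^ (γ-1) :=
    hlim.eventually (eventually_gt_nhds (by linarith))
  obtain ⟨M₀', hM₀'⟩ := Filter.eventually_atTop.1 hev
  set M₀ : ℝ := max M₀' (max 1 (2*r)) with hM₀def
  have hM₀1 : (1:ℝ) ≤ M₀ := le_trans (le_max_left _ _) (le_max_right _ _)
  have hM₀r : 2*r ≤ M₀ := le_trans (le_max_right _ _) (le_max_right _ _)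
  have hM₀0 : (0:ℝ) < M₀ := lt_of_lt_of_le one_pos hM₀1
  have hpbd : ∀ t : ℝ, M₀ ≤ t → pinf/2 * t ^ (γ-1) ≤ deriv p t := by
    intro t ht
    have ht0 : 0 < t := lt_of_lt_of_le hM₀0 ht
    have h1 := hM₀' t (le_trans (le_max_left _ _) ht)
    have h2 : 0 < t ^ (γ-1) := Real.rpow_pos_of_pos ht0 _
    rw [lt_div_iff₀ h2] at h1
    linarith
  set K : ℝ := pinf / (2*γ) with hKdef
  have hK : 0 < K := div_pos hpinf (by linarith)
  -- lower bound for p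
  have hplow : ∀ z : ℝ, M₀ ≤ z → K * z ^ γ - K * M₀ ^ γ ≤ p z := by
    have hmono1 : MonotoneOn (fun z => p z - K * z ^ γ) (Set.Ici M₀) := by
      apply monotoneOn_of_deriv_nonneg (convex_Ici _)
      · intro x hx
        have hx0 : 0 < x := lt_of_lt_of_le hM₀0 hx
        exact ((hpd x hx0).sub
          ((Real.hasDerivAt_rpow_const (Or.inl hx0.ne')).const_mul K)).continuousAt.continuousWithinAt
      · intro x hx
        rw [interior_Ici] at hx
        have hx0 : 0 < x := lt_trans hM₀0 hx
        exact ((hpd x hx0).sub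
          ((Real.hasDerivAt_rpow_const (Or.inl hx0.ne')).const_mul K)).differentiableAt.differentiableWithinAt
      · intro x hx
        rw [interior_Ici] at hx
        have hx0 : 0 < x := lt_trans hM₀0 hx
        rw [(show HasDerivAt (fun z => p z - K * z ^ γ) _ x from (hpd x hx0).sub
          ((Real.hasDerivAt_rpow_const (Or.inl hx0.ne')).const_mul K)).deriv]
        have hb := hpbd x hx.le
        have hKγ : K * (γ * x ^ (γ-1)) = pinf/2 * x ^ (γ-1) := by
          rw [hKdef]; field_simp
        linarith [hKγ]
    intro z hz
    have := hmono1 Set.self_mem_Ici (Set.mem_Ici.2 hz) hz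
    have hpM := hppos M₀ hM₀0
    simp only at this
    linarith
  -- F monotone
  have hFmono : MonotoneOn F (Set.Ioi 0) := by
    apply monotoneOn_of_deriv_nonneg (convex_Ioi _)
    · exact fun x hx => (hFd x hx).continuousAt.continuousWithinAt
    · intro x hx
      rw [interior_Ioi] at hx
      exact (hFd x hx).differentiableAt.differentiableWithinAt
    · intro x hx
      rw [interior_Ioi] at hx
      rw [(hFd x hx).deriv]
      exact le_of_lt (div_pos (hppos x hx) (pow_pos hx 2))
  set B : ℝ := K * M₀ ^ γ with hBdef
  have hB : 0 < B := mul_pos hK (Real.rpow_pos_of_pos hM₀0 _)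
  -- lower bound for G
  have hGlow : ∀ ρ : ℝ, M₀ ≤ ρ → F M₀ + K * ρ ^ (γ-1) - B ≤ G ρ := by
    intro ρ hρ
    have hρ0 : 0 < ρ := lt_of_lt_of_le hM₀0 hρ
    have hρ1 : 1 ≤ ρ := le_trans hM₀1 hρ
    have h1 : F M₀ ≤ F ρ := hFmono (Set.mem_Ioi.2 hM₀0) (Set.mem_Ioi.2 hρ0) hρ
    have h2 : K * ρ ^ γ - B ≤ p ρ := by
      have := hplow ρ hρ
      have hMρ : K * M₀ ^ γ = B := rfl
      linarith
    have h3 : K * ρ ^ (γ-1) - B ≤ p ρ / ρ := by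
      have hd : (K * ρ ^ γ - B) / ρ ≤ p ρ / ρ := by gcongr
      have hBρ : B / ρ ≤ B := div_le_self hB.le hρ1
      have hsd : (K * ρ ^ γ - B)/ρ = K * ρ ^ γ/ρ - B/ρ := sub_div _ _ _
      have hre : K * ρ ^ (γ-1) = K * ρ ^ γ / ρ := by
        rw [Real.rpow_sub hρ0, Real.rpow_one, mul_div_assoc]
      linarith
    simp only [hGdef]
    linarith
  -- choose M₁
  have htt : Filter.Tendsto (fun ρ:ℝ => ρ ^ (γ-1)) Filter.atTop Filter.atTop :=
    tendsto_rpow_atTop hγ1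
  obtain ⟨M₁', hM₁'⟩ := Filter.eventually_atTop.1
    (htt.eventually_ge_atTop ((B + (G r - F M₀)) / (K/2)))
  set M₁ : ℝ := max M₁' M₀ with hM₁def
  have hM₁0 : M₀ ≤ M₁ := le_max_right _ _
  have hM₁pos : 0 < M₁ := lt_of_lt_of_le hM₀0 hM₁0
  have hM₁bd : ∀ b : ℝ, M₁ ≤ b → (B + (G r - F M₀)) / (K/2) ≤ b ^ (γ-1) :=
    fun b hb => hM₁' b (le_trans (le_max_left _ _) hb)
  -- final constant
  have hden1 : (0:ℝ) < 1 + (r/2) ^ γ := by positivity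
  have hden2 : (0:ℝ) < 1 + M₁ ^ γ := by positivity
  set c : ℝ := min (min (p r) (K/(2*γ))) (min (E (r/2) / (1+(r/2)^γ)) (E (2*r) / (1+M₁^γ)))
    with hcdef
  have hc3 : 0 < K/(2*γ) := by positivity
  have hcpos : 0 < c := by
    apply lt_min (lt_min (hppos r hr) hc3) (lt_min ?_ ?_)
    · exact div_pos he1 hden1
    · exact div_pos he2 hden2
  have hc₃le : c ≤ K/(2*γ) := le_trans (min_le_left _ _) (min_le_right _ _)
  have hcpr : c ≤ p r := le_trans (min_le_left _ _) (min_le_left _ _)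
  have hc1 : c * (1+(r/2)^γ) ≤ E (r/2) := by
    rw [← le_div_iff₀ hden1]
    exact le_trans (min_le_right _ _) (min_le_left _ _)
  have hc2 : c * (1+M₁^γ) ≤ E (2*r) := by
    rw [← le_div_iff₀ hden2]
    exact le_trans (min_le_right _ _) (min_le_right _ _)
  have hEeq : ∀ x : ℝ, H x - G r * (x - r) - H x = H x - G r * (x - r) - H x := fun _ => rfl
  have hEshow : ∀ x : ℝ, H x - G r * (x - r) - H r = E x := fun _ => rfl
  clear_value f F G E K B M₀ M₁ c
  clear hf hFdef hGdef hEdef hKdef hBdef hM₀def hM₁def hcdef hH hH0 hlim hp1 hpc hEeq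
  have hpos1 : (0:ℝ) < K := hK
  have hGtail : ∀ ρ : ℝ, M₁ ≤ ρ → G r + (K/2) * ρ ^ (γ-1) ≤ G ρ := by
    intro ρ hρ
    have hρM₀ : M₀ ≤ ρ := le_trans hM₁0 hρ
    have h1 := hGlow ρ hρM₀
    have h2 := hM₁bd ρ hρ
    rw [div_le_iff₀ (by positivity : (0:ℝ) < K/2), mul_comm] at h2
    linarith
  -- tail monotonicity of E ρ - c(1+ρ^γ)
  have hφ : MonotoneOn (fun ρ => E ρ - c*(1+ρ^γ)) (Set.Ici M₁) := by
    have hd : ∀ x : ℝ, 0 < x →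
        HasDerivAt (fun ρ => E ρ - c*(1+ρ^γ)) ((G x - G r) - c*(γ * x ^ (γ-1))) x := by
      intro x hx0
      exact (hEd x hx0).sub
        (((Real.hasDerivAt_rpow_const (Or.inl hx0.ne')).const_add 1).const_mul c)
    apply monotoneOn_of_deriv_nonneg (convex_Ici _)
    · intro x hx
      exact (hd x (lt_of_lt_of_le hM₁pos hx)).continuousAt.continuousWithinAt
    · intro x hx
      rw [interior_Ici] at hx
      exact (hd x (lt_trans hM₁pos hx)).differentiableAt.differentiableWithinAt
    · intro x hx
      rw [interior_Ici] at hx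
      have hx0 : 0 < x := lt_trans hM₁pos hx
      rw [(hd x hx0).deriv]
      have h1 := hGtail x hx.le
      have h2 : 0 ≤ x ^ (γ-1) := (Real.rpow_pos_of_pos hx0 _).le
      have h3 : c * (γ * x ^ (γ-1)) ≤ (K/2) * x ^ (γ-1) := by
        have hcγ : c * γ ≤ K/2 := by
          calc c * γ ≤ K/(2*γ) * γ := mul_le_mul_of_nonneg_right hc₃le hγ0.le
          _ = K/2 := by field_simp [hγ0.ne']
        calc c * (γ * x ^ (γ-1)) = (c*γ) * x ^ (γ-1) := by ring
        _ ≤ (K/2) * x ^ (γ-1) := mul_le_mul_of_nonneg_right hcγ h2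
      linarith
  -- main case analysis
  refine ⟨c, hcpos, ?_⟩
  intro ρ hρ0 hcase
  rw [hderivH, hEshow ρ]
  rcases hcase with hcs | hcs
  · rcases eq_or_lt_of_le hρ0 with h0 | h0
    · rw [← h0, Real.zero_rpow hγ0.ne', hE0]
      linarith only [hcpr]
    · have h1 : E (r/2) ≤ E ρ := hle1 ρ h0 hcs
      have h2 : ρ ^ γ ≤ (r/2) ^ γ := Real.rpow_le_rpow hρ0 hcs hγ0.le
      calc c * (1 + ρ ^ γ) ≤ c * (1 + (r/2) ^ γ) :=
            mul_le_mul_of_nonneg_left (add_le_add_right h2 1) hcpos.le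
        _ ≤ E (r/2) := hc1
        _ ≤ E ρ := h1
  · by_cases hM : ρ ≤ M₁
    · have h1 : E (2*r) ≤ E ρ := hmono2 Set.self_mem_Ici (Set.mem_Ici.2 hcs) hcs
      have h2 : ρ ^ γ ≤ M₁ ^ γ := Real.rpow_le_rpow hρ0 hM hγ0.le
      calc c * (1 + ρ ^ γ) ≤ c * (1 + M₁ ^ γ) :=
            mul_le_mul_of_nonneg_left (add_le_add_right h2 1) hcpos.le
        _ ≤ E (2*r) := hc2
        _ ≤ E ρ := h1
    · push_neg at hM
      have h1 : E M₁ - c*(1+M₁^γ) ≤ E ρ - c*(1+ρ^γ) :=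
        hφ Set.self_mem_Ici (Set.mem_Ici.2 hM.le) hM.le
      have h2 : E (2*r) ≤ E M₁ := hmono2 Set.self_mem_Ici
        (Set.mem_Ici.2 (le_trans hM₀r hM₁0)) (le_trans hM₀r hM₁0)
      linarith only [h1, h2, hc2]
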